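/- Let ε ∈ (0,1), δ > 0, c > 0, and suppose there exist real numbers α ≥ 0 and β ≥ 0 satisfying the three feasibility conditions: (i) α ≤ c + 2(−1+ε)β, (ii) (−1+ε)α + c ≤ β, (iii) α ≥ c/(1+δ). Then necessarily ε ≥ 1/2. In other words, the feasibility conditions defining the forward-invariant set R_FI can only be satisfied when the CSTLN parameter ε lies in [1/2, 1). -/
import Mathlib

/-- If `ε ∈ (0,1)`, `δ > 0`, `c > 0`, and there exist `α, β ≥ 0`
satisfying the feasibility conditions (i) `α ≤ c + 2(−1+ε)β`,
(ii) `(−1+ε)α + c ≤ β`, (iii) `α ≥ c/(1+δ)`, then necessarily `ε ≥ 1/2`. -/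
theorem cstln_feasibility_forces_eps_ge_half (ε δ c α β : ℝ)
    (hε : 0 < ε) (hε1 : ε < 1) (hδ : 0 < δ) (hc : 0 < c)
    (hα : 0 ≤ α) (hβ : 0 ≤ β)
    (h1 : α ≤ c + 2 * (-1 + ε) * β)
    (h2 : (-1 + ε) * α + c ≤ β)
    (h3 : c / (1 + δ) ≤ α) :
    1 / 2 ≤ ε := by
  by_contra h
  push_neg at h
  -- key combined inequality
  have key : α * (1 - 2 * (1 - ε)^2) ≤ c * (1 - 2 * (1 - ε)) := by nlinarith
  have hαc : α ≤ c := by nlinarith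
  rcases le_or_gt 0 (1 - 2 * (1 - ε)^2) with h0 | h0
  · nlinarith
  · nlinarith [mul_pos hc (sub_pos.mpr hε1)]
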